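/- Let G be a countably infinite simple graph with the extension property: for all disjoint finite sets A, B of vertices there exists a vertex v ∉ A ∪ B adjacent to every vertex of A and to no vertex of B. (Such a graph is the Rado graph.) Then its distinguishing number is 2: there exists a coloring c of the vertices with values in Bool such that the only automorphism g of G with c ∘ g = c is the identity, while G does have a nontrivial automorphism. -/

import Mathlib

namespace RadoAux

variable {V : Type*} (G : SimpleGraph V)

section
variable (hext : ∀ A B : Finset V, Disjoint A B →
      ∃ v, v ∉ A ∧ v ∉ B ∧ (∀ a ∈ A, G.Adj v a) ∧ (∀ b ∈ B, ¬ G.Adj v b))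

open Classical in
noncomputable def pick (A B : Finset V) : V :=
  (hext (A \ B) (B \ A) disjoint_sdiff_sdiff).choose

open Classical in
lemma pick_spec {A B : Finset V} (h : Disjoint A B) :
    pick G hext A B ∉ A ∧ pick G hext A B ∉ B ∧
    (∀ a ∈ A, G.Adj (pick G hext A B) a) ∧ (∀ b ∈ B, ¬ G.Adj (pick G hext A B) b) := by
  obtain ⟨ha, hb, hA, hB⟩ := (hext (A \ B) (B \ A) disjoint_sdiff_sdiff).choose_spec
  refine ⟨?_, ?_, ?_, ?_⟩
  · intro hmem
    have : pick G hext A B ∉ B := fun hB' => (Finset.disjoint_left.mp h) hmem hB'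
    exact ha (Finset.mem_sdiff.mpr ⟨hmem, this⟩)
  · intro hmem
    have : pick G hext A B ∉ A := fun hA' => (Finset.disjoint_left.mp h) hA' hmem
    exact hb (Finset.mem_sdiff.mpr ⟨hmem, this⟩)
  · intro a haA
    exact hA a (Finset.mem_sdiff.mpr ⟨haA, fun hB' => (Finset.disjoint_left.mp h) haA hB'⟩)
  · intro b hbB
    exact hB b (Finset.mem_sdiff.mpr ⟨hbB, fun hA' => (Finset.disjoint_left.mp h) hA' hbB⟩)

variable (ep : ℕ ≃ V × V)

open Classical in
noncomputable def st : ℕ → V × Finset V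
  | 0 => (pick G hext ∅ ∅, ∅)
  | (n+1) =>
    let c := (st n).1
    let S := (st n).2
    let u := (ep n).1
    let v := (ep n).2
    (if u ≠ v ∧ u ∉ S ∧ v ∉ S ∧ v ≠ c ∧ u ≠ c
      then pick G hext {c, u} (S ∪ {v})
      else pick G hext {c} S,
     S ∪ {c})

noncomputable def xs (n : ℕ) : V := (st G hext ep n).1

open Classical in
lemma st_snd : ∀ n, (st G hext ep n).2 = (Finset.range n).image (xs G hext ep) := by
  intro n
  induction n with
  | zero => simp [st]
  | succ n ih =>
    have h2 : (st G hext ep (n+1)).2 = (st G hext ep n).2 ∪ {(st G hext ep n).1} := by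
      simp [st]
    rw [h2, ih, Finset.range_add_one, Finset.image_insert, Finset.union_comm,
      ← Finset.insert_eq]
    rfl


open Classical in
lemma step_key (n : ℕ) (h : xs G hext ep n ∉ (st G hext ep n).2) :
    xs G hext ep (n+1) ∉ (st G hext ep (n+1)).2 ∧
    G.Adj (xs G hext ep (n+1)) (xs G hext ep n) ∧
    (∀ w ∈ (st G hext ep n).2, ¬ G.Adj (xs G hext ep (n+1)) w) ∧
    ((ep n).1 ≠ (ep n).2 → (ep n).1 ∉ (st G hext ep (n+1)).2 →
      (ep n).2 ∉ (st G hext ep (n+1)).2 →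
      G.Adj (xs G hext ep (n+1)) (ep n).1 ∧ ¬ G.Adj (xs G hext ep (n+1)) (ep n).2) := by
  have hst2 : (st G hext ep (n+1)).2 = (st G hext ep n).2 ∪ {xs G hext ep n} := by
    simp [st, xs]
  have hx1 : xs G hext ep (n+1) =
      (if (ep n).1 ≠ (ep n).2 ∧ (ep n).1 ∉ (st G hext ep n).2 ∧
          (ep n).2 ∉ (st G hext ep n).2 ∧ (ep n).2 ≠ xs G hext ep n ∧
          (ep n).1 ≠ xs G hext ep n
        then pick G hext {xs G hext ep n, (ep n).1} ((st G hext ep n).2 ∪ {(ep n).2})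
        else pick G hext {xs G hext ep n} (st G hext ep n).2) := by
    simp only [xs, st]
    rfl
  by_cases hcond : (ep n).1 ≠ (ep n).2 ∧ (ep n).1 ∉ (st G hext ep n).2 ∧
      (ep n).2 ∉ (st G hext ep n).2 ∧ (ep n).2 ≠ xs G hext ep n ∧
      (ep n).1 ≠ xs G hext ep n
  · rw [if_pos hcond] at hx1
    obtain ⟨huv, huS, hvS, hvc, huc⟩ := hcond
    have hdisj : Disjoint ({xs G hext ep n, (ep n).1} : Finset V)
        ((st G hext ep n).2 ∪ {(ep n).2}) := by
      rw [Finset.disjoint_left]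
      intro x hx hx'
      rw [Finset.mem_insert, Finset.mem_singleton] at hx
      rw [Finset.mem_union, Finset.mem_singleton] at hx'
      rcases hx with rfl | rfl
      · rcases hx' with hx' | heq
        · exact h hx'
        · exact hvc heq.symm
      · rcases hx' with hx' | heq
        · exact huS hx'
        · exact huv heq
    obtain ⟨hA, hB, hadjA, hadjB⟩ := pick_spec G hext hdisj
    rw [← hx1] at hA hB hadjA hadjB
    refine ⟨?_, ?_, ?_, ?_⟩
    · rw [hst2]
      intro hmem
      rw [Finset.mem_union, Finset.mem_singleton] at hmem
      rcases hmem with hmem | heq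
      · exact hB (Finset.mem_union_left _ hmem)
      · exact hA (by rw [heq]; exact Finset.mem_insert_self _ _)
    · exact hadjA _ (Finset.mem_insert_self _ _)
    · intro w hw
      exact hadjB w (Finset.mem_union_left _ hw)
    · intro _ _ _
      exact ⟨hadjA _ (by simp), hadjB _ (by simp)⟩
  · rw [if_neg hcond] at hx1
    have hdisj : Disjoint ({xs G hext ep n} : Finset V) (st G hext ep n).2 := by
      rw [Finset.disjoint_left]
      intro x hx hx'
      rw [Finset.mem_singleton] at hx
      exact h (hx ▸ hx')
    obtain ⟨hA, hB, hadjA, hadjB⟩ := pick_spec G hext hdisj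
    rw [← hx1] at hA hB hadjA hadjB
    refine ⟨?_, ?_, ?_, ?_⟩
    · rw [hst2]
      intro hmem
      rw [Finset.mem_union, Finset.mem_singleton] at hmem
      rcases hmem with hmem | heq
      · exact hB hmem
      · exact hA (by rw [heq]; exact Finset.mem_singleton_self _)
    · exact hadjA _ (Finset.mem_singleton_self _)
    · intro w hw
      exact hadjB w hw
    · intro huv hu2 hv2
      exfalso
      rw [hst2, Finset.mem_union, Finset.mem_singleton] at hu2 hv2
      push_neg at hu2 hv2
      exact hcond ⟨huv, hu2.1, hv2.1, hv2.2, hu2.2⟩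

lemma xs_not_mem : ∀ n, xs G hext ep n ∉ (st G hext ep n).2 := by
  intro n
  induction n with
  | zero => simp [st]
  | succ n ih => exact (step_key G hext ep n ih).1

open Classical in
lemma xs_mem_st {i j : ℕ} (h : i < j) : xs G hext ep i ∈ (st G hext ep j).2 := by
  rw [st_snd]
  exact Finset.mem_image_of_mem _ (Finset.mem_range.mpr h)

lemma xs_inj : Function.Injective (xs G hext ep) := by
  have key : ∀ i j, i < j → xs G hext ep i ≠ xs G hext ep j := by
    intro i j hij heq
    exact xs_not_mem G hext ep j (heq ▸ xs_mem_st G hext ep hij)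
  intro i j heq
  rcases lt_trichotomy i j with h | h | h
  · exact absurd heq (key i j h)
  · exact h
  · exact absurd heq.symm (key j i h)

lemma adj_succ (n : ℕ) : G.Adj (xs G hext ep (n+1)) (xs G hext ep n) :=
  (step_key G hext ep n (xs_not_mem G hext ep n)).2.1

lemma not_adj_of_lt {i n : ℕ} (h : i < n) :
    ¬ G.Adj (xs G hext ep (n+1)) (xs G hext ep i) :=
  (step_key G hext ep n (xs_not_mem G hext ep n)).2.2.1 _ (xs_mem_st G hext ep h)

lemma adj_iff (i j : ℕ) :
    G.Adj (xs G hext ep i) (xs G hext ep j) ↔ (i = j + 1 ∨ j = i + 1) := by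
  have aux : ∀ i j, j < i → (G.Adj (xs G hext ep i) (xs G hext ep j) ↔ i = j + 1) := by
    intro i j hji
    constructor
    · intro hadj
      obtain ⟨m, rfl⟩ : ∃ m, i = m + 1 := ⟨i - 1, by omega⟩
      have hjm : j ≤ m := Nat.lt_succ_iff.mp hji
      rcases lt_or_eq_of_le hjm with h | rfl
      · exact absurd hadj (not_adj_of_lt G hext ep h)
      · rfl
    · rintro rfl
      exact adj_succ G hext ep j
  rcases lt_trichotomy i j with h | rfl | h
  · rw [G.adj_comm, aux j i h]
    constructor
    · intro hh
      exact Or.inr hh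
    · rintro (hh | hh)
      · omega
      · exact hh
  · simp only [G.irrefl, false_iff]
    omega
  · rw [aux i j h]
    constructor
    · intro hh
      exact Or.inl hh
    · rintro (hh | hh)
      · exact hh
      · omega

open Classical in
lemma sep (n : ℕ) (hu : (ep n).1 ∉ Set.range (xs G hext ep))
    (hv : (ep n).2 ∉ Set.range (xs G hext ep)) (hne : (ep n).1 ≠ (ep n).2) :
    G.Adj (xs G hext ep (n+1)) (ep n).1 ∧ ¬ G.Adj (xs G hext ep (n+1)) (ep n).2 := by
  have hsub : ∀ w : V, w ∈ (st G hext ep (n+1)).2 → w ∈ Set.range (xs G hext ep) := by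
    intro w hw
    rw [st_snd] at hw
    obtain ⟨i, _, rfl⟩ := Finset.mem_image.mp hw
    exact ⟨i, rfl⟩
  exact (step_key G hext ep n (xs_not_mem G hext ep n)).2.2.2 hne
    (fun hh => hu (hsub _ hh)) (fun hh => hv (hsub _ hh))


include hext ep in
open Classical in
lemma part1 : ∃ c : V → Bool, ∀ g : G ≃g G, (∀ v, c (g v) = c v) → ∀ v, g v = v := by
  refine ⟨fun v => decide (v ∈ Set.range (xs G hext ep)), ?_⟩
  intro g hg
  have black : ∀ v : V, g v ∈ Set.range (xs G hext ep) ↔ v ∈ Set.range (xs G hext ep) := by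
    intro v
    simpa only [decide_eq_decide] using hg v
  have blackinv : ∀ v : V, g.symm v ∈ Set.range (xs G hext ep) ↔
      v ∈ Set.range (xs G hext ep) := by
    intro v
    conv_rhs => rw [← g.apply_symm_apply v]
    exact (black _).symm
  choose σ hσ using fun n => (black (xs G hext ep n)).mpr ⟨n, rfl⟩
  choose τ hτ using fun n => (blackinv (xs G hext ep n)).mpr ⟨n, rfl⟩
  have τσ : ∀ n, τ (σ n) = n := by
    intro n
    apply xs_inj G hext ep
    rw [hτ, hσ, g.symm_apply_apply]
  have στ : ∀ n, σ (τ n) = n := by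
    intro n
    apply xs_inj G hext ep
    rw [hσ, hτ, g.apply_symm_apply]
  have σinj : Function.Injective σ := Function.LeftInverse.injective τσ
  have τinj : Function.Injective τ := Function.LeftInverse.injective στ
  have adjσ : ∀ i j, G.Adj (xs G hext ep (σ i)) (xs G hext ep (σ j)) ↔
      G.Adj (xs G hext ep i) (xs G hext ep j) := by
    intro i j
    rw [hσ, hσ]
    exact g.map_adj_iff
  have adjτ : ∀ i j, G.Adj (xs G hext ep (τ i)) (xs G hext ep (τ j)) ↔
      G.Adj (xs G hext ep i) (xs G hext ep j) := by
    intro i j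
    rw [hτ, hτ]
    exact g.symm.map_adj_iff
  have nbrσ : ∀ i j, (σ i = σ j + 1 ∨ σ j = σ i + 1) ↔ (i = j + 1 ∨ j = i + 1) := by
    intro i j
    rw [← adj_iff G hext ep (σ i) (σ j), adjσ, adj_iff]
  have nbrτ : ∀ i j, (τ i = τ j + 1 ∨ τ j = τ i + 1) ↔ (i = j + 1 ∨ j = i + 1) := by
    intro i j
    rw [← adj_iff G hext ep (τ i) (τ j), adjτ, adj_iff]
  have σ0 : σ 0 = 0 := by
    by_contra h0
    obtain ⟨k, hk⟩ : ∃ k, σ 0 = k + 1 := ⟨σ 0 - 1, by omega⟩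
    have hτk1 : τ (k+1) = 0 := by rw [← hk, τσ]
    have h1 : τ k = 1 := by
      have := (nbrτ (k+1) k).mpr (Or.inl rfl)
      rw [hτk1] at this
      omega
    have h2 : τ (k+2) = 1 := by
      have := (nbrτ (k+2) (k+1)).mpr (Or.inl rfl)
      rw [hτk1] at this
      omega
    have := τinj (h1.trans h2.symm)
    omega
  have σid : ∀ n, σ n = n := by
    intro n
    induction n using Nat.strong_induction_on with
    | _ n ih =>
      match n with
      | 0 => exact σ0
      | (m+1) =>
        have hm : σ m = m := ih m (by omega)
        have hnb := (nbrσ (m+1) m).mpr (Or.inl rfl)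
        rw [hm] at hnb
        rcases hnb with h | h
        · exact h
        · have hlt : σ (m+1) < m + 1 := by omega
          have h2 : σ (σ (m+1)) = σ (m+1) := ih _ hlt
          have h3 : σ (m+1) = m + 1 := σinj h2
          omega
  intro v
  by_contra hv
  by_cases hb : v ∈ Set.range (xs G hext ep)
  · obtain ⟨n, rfl⟩ := hb
    exact hv (by rw [← hσ, σid])
  · have hbg : g v ∉ Set.range (xs G hext ep) := fun hh => hb ((black v).mp hh)
    have hpm : ep (ep.symm (v, g v)) = (v, g v) := ep.apply_symm_apply _
    have h1 : (ep (ep.symm (v, g v))).1 = v := by rw [hpm]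
    have h2 : (ep (ep.symm (v, g v))).2 = g v := by rw [hpm]
    obtain ⟨hadj, hnadj⟩ := sep G hext ep (ep.symm (v, g v)) (by rw [h1]; exact hb)
      (by rw [h2]; exact hbg) (by rw [h1, h2]; exact fun e => hv e.symm)
    rw [h1] at hadj
    rw [h2] at hnadj
    have hfix : g (xs G hext ep (ep.symm (v, g v) + 1)) =
        xs G hext ep (ep.symm (v, g v) + 1) := by rw [← hσ, σid]
    have hadj2 : G.Adj (g (xs G hext ep (ep.symm (v, g v) + 1))) (g v) :=
      g.map_adj_iff.mpr hadj
    rw [hfix] at hadj2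
    exact hnadj hadj2


variable (e : ℕ ≃ V)

open Classical in
noncomputable def extFst (L : List (V × V)) (v : V) : V :=
  pick G hext (((L.filter fun p => decide (G.Adj v p.1)).map Prod.snd).toFinset)
              (((L.filter fun p => decide (¬ G.Adj v p.1)).map Prod.snd).toFinset)

open Classical in
noncomputable def extSnd (L : List (V × V)) (w : V) : V :=
  pick G hext (((L.filter fun p => decide (G.Adj w p.2)).map Prod.fst).toFinset)
              (((L.filter fun p => decide (¬ G.Adj w p.2)).map Prod.fst).toFinset)

def Inv (L : List (V × V)) : Prop :=
  (∀ p ∈ L, ∀ q ∈ L, p.1 = q.1 → p = q) ∧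
  (∀ p ∈ L, ∀ q ∈ L, p.2 = q.2 → p = q) ∧
  (∀ p ∈ L, ∀ q ∈ L, (G.Adj p.1 q.1 ↔ G.Adj p.2 q.2))

open Classical in
lemma extFst_spec (L : List (V × V)) (hL : Inv G L) (v : V) :
    (∀ p ∈ L, extFst G hext L v ≠ p.2) ∧
    (∀ p ∈ L, (G.Adj v p.1 ↔ G.Adj (extFst G hext L v) p.2)) := by
  have hdisj : Disjoint (((L.filter fun p => decide (G.Adj v p.1)).map Prod.snd).toFinset)
      (((L.filter fun p => decide (¬ G.Adj v p.1)).map Prod.snd).toFinset) := by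
    rw [Finset.disjoint_left]
    intro z hz hz'
    rw [List.mem_toFinset, List.mem_map] at hz hz'
    obtain ⟨p, hp, hpz⟩ := hz
    obtain ⟨q, hq, hqz⟩ := hz'
    rw [List.mem_filter] at hp hq
    have hpq : p = q := hL.2.1 p hp.1 q hq.1 (by rw [hpz, hqz])
    have h1 := of_decide_eq_true hp.2
    have h2 := of_decide_eq_true hq.2
    rw [hpq] at h1
    exact h2 h1
  obtain ⟨hA, hB, hadjA, hadjB⟩ := pick_spec G hext hdisj
  constructor
  · intro p hp heq
    by_cases hadj : G.Adj v p.1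
    · exact hA (by
        rw [List.mem_toFinset, List.mem_map]
        exact ⟨p, List.mem_filter.mpr ⟨hp, decide_eq_true hadj⟩, heq.symm⟩)
    · exact hB (by
        rw [List.mem_toFinset, List.mem_map]
        exact ⟨p, List.mem_filter.mpr ⟨hp, decide_eq_true hadj⟩, heq.symm⟩)
  · intro p hp
    constructor
    · intro hadj
      exact hadjA _ (by
        rw [List.mem_toFinset, List.mem_map]
        exact ⟨p, List.mem_filter.mpr ⟨hp, decide_eq_true hadj⟩, rfl⟩)
    · intro hadj
      by_contra hn
      exact hadjB _ (by
        rw [List.mem_toFinset, List.mem_map]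
        exact ⟨p, List.mem_filter.mpr ⟨hp, decide_eq_true hn⟩, rfl⟩) hadj

open Classical in
lemma extSnd_spec (L : List (V × V)) (hL : Inv G L) (w : V) :
    (∀ p ∈ L, extSnd G hext L w ≠ p.1) ∧
    (∀ p ∈ L, (G.Adj w p.2 ↔ G.Adj (extSnd G hext L w) p.1)) := by
  have hdisj : Disjoint (((L.filter fun p => decide (G.Adj w p.2)).map Prod.fst).toFinset)
      (((L.filter fun p => decide (¬ G.Adj w p.2)).map Prod.fst).toFinset) := by
    rw [Finset.disjoint_left]
    intro z hz hz'
    rw [List.mem_toFinset, List.mem_map] at hz hz'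
    obtain ⟨p, hp, hpz⟩ := hz
    obtain ⟨q, hq, hqz⟩ := hz'
    rw [List.mem_filter] at hp hq
    have hpq : p = q := hL.1 p hp.1 q hq.1 (by rw [hpz, hqz])
    have h1 := of_decide_eq_true hp.2
    have h2 := of_decide_eq_true hq.2
    rw [hpq] at h1
    exact h2 h1
  obtain ⟨hA, hB, hadjA, hadjB⟩ := pick_spec G hext hdisj
  constructor
  · intro p hp heq
    by_cases hadj : G.Adj w p.2
    · exact hA (by
        rw [List.mem_toFinset, List.mem_map]
        exact ⟨p, List.mem_filter.mpr ⟨hp, decide_eq_true hadj⟩, heq.symm⟩)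
    · exact hB (by
        rw [List.mem_toFinset, List.mem_map]
        exact ⟨p, List.mem_filter.mpr ⟨hp, decide_eq_true hadj⟩, heq.symm⟩)
  · intro p hp
    constructor
    · intro hadj
      exact hadjA _ (by
        rw [List.mem_toFinset, List.mem_map]
        exact ⟨p, List.mem_filter.mpr ⟨hp, decide_eq_true hadj⟩, rfl⟩)
    · intro hadj
      by_contra hn
      exact hadjB _ (by
        rw [List.mem_toFinset, List.mem_map]
        exact ⟨p, List.mem_filter.mpr ⟨hp, decide_eq_true hn⟩, rfl⟩) hadj

lemma inv_append_fst (L : List (V × V)) (hL : Inv G L) (v : V)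
    (hv : v ∉ L.map Prod.fst) :
    Inv G (L ++ [(v, extFst G hext L v)]) := by
  obtain ⟨hnew, hiff⟩ := extFst_spec G hext L hL v
  obtain ⟨h1, h2, h3⟩ := hL
  have hmem : ∀ p : V × V, p ∈ L ++ [(v, extFst G hext L v)] ↔
      p ∈ L ∨ p = (v, extFst G hext L v) := by
    intro p
    rw [List.mem_append, List.mem_singleton]
  refine ⟨?_, ?_, ?_⟩
  · intro p hp q hq heq
    rw [hmem] at hp hq
    rcases hp with hp | rfl <;> rcases hq with hq | rfl
    · exact h1 p hp q hq heq
    · exact absurd (List.mem_map.mpr ⟨p, hp, heq⟩) hv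
    · exact absurd (List.mem_map.mpr ⟨q, hq, heq.symm⟩) hv
    · rfl
  · intro p hp q hq heq
    rw [hmem] at hp hq
    rcases hp with hp | rfl <;> rcases hq with hq | rfl
    · exact h2 p hp q hq heq
    · exact absurd heq.symm (hnew p hp)
    · exact absurd heq (hnew q hq)
    · rfl
  · intro p hp q hq
    rw [hmem] at hp hq
    rcases hp with hp | rfl <;> rcases hq with hq | rfl
    · exact h3 p hp q hq
    · rw [G.adj_comm p.1 v, G.adj_comm p.2 _]
      exact hiff p hp
    · exact hiff q hq
    · simp

lemma inv_append_snd (L : List (V × V)) (hL : Inv G L) (w : V)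
    (hw : w ∉ L.map Prod.snd) :
    Inv G (L ++ [(extSnd G hext L w, w)]) := by
  obtain ⟨hnew, hiff⟩ := extSnd_spec G hext L hL w
  obtain ⟨h1, h2, h3⟩ := hL
  have hmem : ∀ p : V × V, p ∈ L ++ [(extSnd G hext L w, w)] ↔
      p ∈ L ∨ p = (extSnd G hext L w, w) := by
    intro p
    rw [List.mem_append, List.mem_singleton]
  refine ⟨?_, ?_, ?_⟩
  · intro p hp q hq heq
    rw [hmem] at hp hq
    rcases hp with hp | rfl <;> rcases hq with hq | rfl
    · exact h1 p hp q hq heq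
    · exact absurd heq.symm (hnew p hp)
    · exact absurd heq (hnew q hq)
    · rfl
  · intro p hp q hq heq
    rw [hmem] at hp hq
    rcases hp with hp | rfl <;> rcases hq with hq | rfl
    · exact h2 p hp q hq heq
    · exact absurd (List.mem_map.mpr ⟨p, hp, heq⟩) hw
    · exact absurd (List.mem_map.mpr ⟨q, hq, heq.symm⟩) hw
    · rfl
  · intro p hp q hq
    rw [hmem] at hp hq
    rcases hp with hp | rfl <;> rcases hq with hq | rfl
    · exact h3 p hp q hq
    · rw [G.adj_comm p.1 _, G.adj_comm p.2 _]
      exact (hiff p hp).symm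
    · exact (hiff q hq).symm
    · simp

open Classical in
noncomputable def bf (a b : V) : ℕ → List (V × V)
  | 0 => [(a, b), (b, a)]
  | (n+1) =>
    let L := bf a b n
    if n % 2 = 0 then
      if e (n / 2) ∈ L.map Prod.fst then L
      else L ++ [(e (n / 2), extFst G hext L (e (n / 2)))]
    else
      if e (n / 2) ∈ L.map Prod.snd then L
      else L ++ [(extSnd G hext L (e (n / 2)), e (n / 2))]

open Classical in
lemma bf_succ (a b : V) (n : ℕ) : bf G hext e a b (n+1) =
    if n % 2 = 0 then
      (if e (n / 2) ∈ (bf G hext e a b n).map Prod.fst then bf G hext e a b n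
       else bf G hext e a b n ++ [(e (n / 2), extFst G hext (bf G hext e a b n) (e (n / 2)))])
    else
      (if e (n / 2) ∈ (bf G hext e a b n).map Prod.snd then bf G hext e a b n
       else bf G hext e a b n ++ [(extSnd G hext (bf G hext e a b n) (e (n / 2)), e (n / 2))]) := by
  simp only [bf]

lemma bf_inv (a b : V) (hab : a ≠ b) : ∀ n, Inv G (bf G hext e a b n) := by
  intro n
  induction n with
  | zero =>
    refine ⟨?_, ?_, ?_⟩ <;>
    · intro p hp q hq
      simp only [bf, List.mem_cons, List.not_mem_nil, or_false] at hp hq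
      rcases hp with rfl | rfl <;> rcases hq with rfl | rfl <;>
        simp_all [G.adj_comm a b]
  | succ n ih =>
    rw [bf_succ]
    by_cases h0 : n % 2 = 0
    · rw [if_pos h0]
      by_cases hmem : e (n / 2) ∈ (bf G hext e a b n).map Prod.fst
      · rw [if_pos hmem]
        exact ih
      · rw [if_neg hmem]
        exact inv_append_fst G hext _ ih _ hmem
    · rw [if_neg h0]
      by_cases hmem : e (n / 2) ∈ (bf G hext e a b n).map Prod.snd
      · rw [if_pos hmem]
        exact ih
      · rw [if_neg hmem]
        exact inv_append_snd G hext _ ih _ hmem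

lemma bf_mono (a b : V) {m n : ℕ} (h : m ≤ n) :
    ∀ p ∈ bf G hext e a b m, p ∈ bf G hext e a b n := by
  induction n, h using Nat.le_induction with
  | base => exact fun p hp => hp
  | succ n _ ih =>
    intro p hp
    rw [bf_succ]
    split_ifs <;> first | exact ih p hp | exact List.mem_append_left _ (ih p hp)

open Classical in
lemma bf_total_fst (a b : V) (v : V) :
    ∃ w, (v, w) ∈ bf G hext e a b (2 * (e.symm v) + 1) := by
  have hmod : (2 * (e.symm v)) % 2 = 0 := by omega
  have hdiv : (2 * (e.symm v)) / 2 = e.symm v := by omega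
  have h1 : bf G hext e a b (2 * (e.symm v) + 1) =
      (if v ∈ (bf G hext e a b (2 * (e.symm v))).map Prod.fst
        then bf G hext e a b (2 * (e.symm v))
        else bf G hext e a b (2 * (e.symm v)) ++
          [(v, extFst G hext (bf G hext e a b (2 * (e.symm v))) v)]) := by
    rw [bf_succ, if_pos hmod, hdiv, e.apply_symm_apply]
  by_cases hmem : v ∈ (bf G hext e a b (2 * (e.symm v))).map Prod.fst
  · rw [h1, if_pos hmem]
    obtain ⟨p, hp, hpv⟩ := List.mem_map.mp hmem
    refine ⟨p.2, ?_⟩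
    have hp' : (p.1, p.2) ∈ bf G hext e a b (2 * (e.symm v)) := by simpa using hp
    rwa [hpv] at hp'
  · rw [h1, if_neg hmem]
    exact ⟨_, List.mem_append_right _ (List.mem_singleton_self _)⟩

open Classical in
lemma bf_total_snd (a b : V) (w : V) :
    ∃ u, (u, w) ∈ bf G hext e a b (2 * (e.symm w) + 2) := by
  have hmod : ¬ ((2 * (e.symm w) + 1) % 2 = 0) := by omega
  have hdiv : (2 * (e.symm w) + 1) / 2 = e.symm w := by omega
  have h1 : bf G hext e a b (2 * (e.symm w) + 2) =
      (if w ∈ (bf G hext e a b (2 * (e.symm w) + 1)).map Prod.snd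
        then bf G hext e a b (2 * (e.symm w) + 1)
        else bf G hext e a b (2 * (e.symm w) + 1) ++
          [(extSnd G hext (bf G hext e a b (2 * (e.symm w) + 1)) w, w)]) := by
    rw [show (2 * (e.symm w) + 2) = (2 * (e.symm w) + 1) + 1 from rfl,
      bf_succ, if_neg hmod, hdiv, e.apply_symm_apply]
  by_cases hmem : w ∈ (bf G hext e a b (2 * (e.symm w) + 1)).map Prod.snd
  · rw [h1, if_pos hmem]
    obtain ⟨p, hp, hpw⟩ := List.mem_map.mp hmem
    refine ⟨p.1, ?_⟩
    have hp' : (p.1, p.2) ∈ bf G hext e a b (2 * (e.symm w) + 1) := by simpa using hp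
    rwa [hpw] at hp'
  · rw [h1, if_neg hmem]
    exact ⟨_, List.mem_append_right _ (List.mem_singleton_self _)⟩

include hext e in
lemma part2 (a b : V) (hab : a ≠ b) : ∃ g : G ≃g G, ∃ v, g v ≠ v := by
  have hfun1 : ∀ p q : V × V, (∃ n, p ∈ bf G hext e a b n) → (∃ n, q ∈ bf G hext e a b n) →
      p.1 = q.1 → p = q := by
    rintro p q ⟨n, hp⟩ ⟨m, hq⟩ h
    exact (bf_inv G hext e a b hab (max n m)).1 p (bf_mono G hext e a b (le_max_left n m) p hp)
      q (bf_mono G hext e a b (le_max_right n m) q hq) h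
  have hfun2 : ∀ p q : V × V, (∃ n, p ∈ bf G hext e a b n) → (∃ n, q ∈ bf G hext e a b n) →
      p.2 = q.2 → p = q := by
    rintro p q ⟨n, hp⟩ ⟨m, hq⟩ h
    exact (bf_inv G hext e a b hab (max n m)).2.1 p (bf_mono G hext e a b (le_max_left n m) p hp)
      q (bf_mono G hext e a b (le_max_right n m) q hq) h
  have hadj : ∀ p q : V × V, (∃ n, p ∈ bf G hext e a b n) → (∃ n, q ∈ bf G hext e a b n) →
      (G.Adj p.1 q.1 ↔ G.Adj p.2 q.2) := by
    rintro p q ⟨n, hp⟩ ⟨m, hq⟩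
    exact (bf_inv G hext e a b hab (max n m)).2.2 p (bf_mono G hext e a b (le_max_left n m) p hp)
      q (bf_mono G hext e a b (le_max_right n m) q hq)
  have htf : ∀ v, ∃ w, ∃ n, (v, w) ∈ bf G hext e a b n := by
    intro v
    obtain ⟨w, hw⟩ := bf_total_fst G hext e a b v
    exact ⟨w, _, hw⟩
  have hts : ∀ w, ∃ u, ∃ n, (u, w) ∈ bf G hext e a b n := by
    intro w
    obtain ⟨u, hu⟩ := bf_total_snd G hext e a b w
    exact ⟨u, _, hu⟩
  choose F hF using htf
  choose Bv hB using hts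
  have li : ∀ v, Bv (F v) = v := by
    intro v
    have := hfun2 (Bv (F v), F v) (v, F v) (hB _) (hF _) rfl
    exact congrArg Prod.fst this
  have ri : ∀ w, F (Bv w) = w := by
    intro w
    have := hfun1 (Bv w, F (Bv w)) (Bv w, w) (hF _) (hB _) rfl
    exact congrArg Prod.snd this
  refine ⟨⟨⟨F, Bv, li, ri⟩, ?_⟩, a, ?_⟩
  · intro u v
    exact (hadj (u, F u) (v, F v) (hF _) (hF _)).symm
  · show F a ≠ a
    have h0 : ((a, b) : V × V) ∈ bf G hext e a b 0 := by simp [bf]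
    have hFa : F a = b := congrArg Prod.snd (hfun1 (a, F a) (a, b) (hF _) ⟨0, h0⟩ rfl)
    rw [hFa]
    exact fun h => hab h.symm

end
end RadoAux


/-- A countably infinite graph with the extension property
(the Rado graph) has distinguishing number 2. -/
theorem rado_graph_distinguishing_number_two
    (V : Type*) [Countable V] [Infinite V] (G : SimpleGraph V)
    (hext : ∀ A B : Finset V, Disjoint A B →
      ∃ v, v ∉ A ∧ v ∉ B ∧ (∀ a ∈ A, G.Adj v a) ∧ (∀ b ∈ B, ¬ G.Adj v b)) :
    (∃ c : V → Bool, ∀ g : G ≃g G, (∀ v, c (g v) = c v) → ∀ v, g v = v) ∧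
    (∃ g : G ≃g G, ∃ v, g v ≠ v) := by
  obtain ⟨d⟩ := nonempty_denumerable V
  letI := d
  let e : ℕ ≃ V := (Denumerable.eqv V).symm
  let ep : ℕ ≃ V × V := (Denumerable.eqv (V × V)).symm
  obtain ⟨a, b, hab⟩ := exists_pair_ne V
  exact ⟨RadoAux.part1 G hext ep, RadoAux.part2 G hext e a b hab⟩
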